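/- For the cyclic directed graph on N ≥ 3 vertices with an edge from i to i+1 (mod N), the height h̄ of the minimal directed spanning tree of the transpose graph equals N − 1, while the coalescence diameter D equals ⌊N/2⌋; in particular D ≤ h̄ and the difference h̄ − D can be arbitrarily large. -/

import Mathlib

open Set

/-- `l` is a directed path of length `m` in the digraph `Adj` (edges `l k → l (k+1)`). -/
def IsDiPath {α : Type*} (Adj : α → α → Prop) (l : ℕ → α) (m : ℕ) : Prop :=
  ∀ k < m, Adj (l k) (l (k + 1))

/-- Coalescence distance of `i` and `j`: the least possible value of
`max(|lⁱ|,|lʲ|)` over pairs of directed paths from `i` and `j` ending at a common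
vertex (paths of length `0` allowed). -/
noncomputable def coalDist {α : Type*} (Adj : α → α → Prop) (i j : α) : ℕ :=
  sInf {m | ∃ (mi mj : ℕ) (li lj : ℕ → α), li 0 = i ∧ lj 0 = j ∧
    IsDiPath Adj li mi ∧ IsDiPath Adj lj mj ∧ li mi = lj mj ∧ m = max mi mj}

/-- Coalescence diameter: `D = sup_{i ≠ j} d_{ij}`. -/
noncomputable def coalDiam {α : Type*} (Adj : α → α → Prop) : ℕ :=
  sSup {m | ∃ i j, i ≠ j ∧ m = coalDist Adj i j}

/-- `p` is a spanning arborescence of the transpose of `Adj`, rooted at `r`: every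
non-root vertex `i` has a parent `p i` with an edge `p i → i` in `Adj` (i.e. an edge
`i → p i` in the transpose), and iterating `p` reaches the root. -/
def IsTransposeArborescence {α : Type*} (Adj : α → α → Prop) (p : α → α) (r : α) : Prop :=
  p r = r ∧ (∀ i, i ≠ r → Adj (p i) i) ∧ ∀ i, ∃ k, p^[k] i = r

/-- Depth of vertex `i` in the arborescence `p` rooted at `r`. -/
noncomputable def arboDepth {α : Type*} (p : α → α) (r : α) (i : α) : ℕ :=
  sInf {k | p^[k] i = r}

section AuxStmt17

open scoped Fin.CommRing


lemma fin_val_add_one {N : ℕ} [NeZero N] (hN : 1 < N) (a : Fin N) :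
    ((a + 1 : Fin N) : ℕ) = (a.val + 1) % N := by
  rw [Fin.val_add, Fin.val_one', Nat.mod_eq_of_lt hN]

variable {N : ℕ} {Adj : Fin N → Fin N → Prop}
    (hAdj : ∀ i j, Adj i j ↔ (j : ℕ) = ((i : ℕ) + 1) % N)

include hAdj in
lemma path_val [NeZero N] (hN : 1 < N) {l : ℕ → Fin N} {m : ℕ}
    (hl : IsDiPath Adj l m) : ∀ k ≤ m, ((l k : Fin N) : ℕ) = ((l 0).val + k) % N := by
  intro k hk
  induction k with
  | zero => simp [Nat.mod_eq_of_lt (l 0).isLt]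
  | succ k ih =>
    have h1 : ((l (k+1) : Fin N) : ℕ) = ((l k).val + 1) % N := (hAdj _ _).mp (hl k (by omega))
    rw [h1, ih (by omega), Nat.mod_add_mod, add_assoc]

include hAdj in
lemma isDiPath_forward [NeZero N] (hN : 1 < N) (i : Fin N) (m : ℕ) :
    IsDiPath Adj (fun k => i + (k : Fin N)) m := by
  intro k _
  rw [hAdj]
  show ((i + ((k+1 : ℕ) : Fin N) : Fin N) : ℕ) = (((i + (k : Fin N) : Fin N) : ℕ) + 1) % N
  have hc : ((k+1 : ℕ) : Fin N) = (k : Fin N) + 1 := by push_cast; ring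
  rw [hc, ← add_assoc, fin_val_add_one hN]

lemma nat_mod_sum {N a b : ℕ} (ha : a < N) (hb : b < N) (hab : a ≠ b) :
    (N - b + a) % N + (N - a + b) % N = N := by
  rcases Nat.lt_or_ge a b with h | h
  · have e1 : (N - b + a) % N = N - b + a := Nat.mod_eq_of_lt (by omega)
    have e2 : N - a + b = (b - a) + N := by omega
    rw [e1, e2, Nat.add_mod_right, Nat.mod_eq_of_lt (by omega)]
    omega
  · have h' : b < a := by omega
    have e1 : (N - a + b) % N = N - a + b := Nat.mod_eq_of_lt (by omega)
    have e2 : N - b + a = (a - b) + N := by omega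
    rw [e1, e2, Nat.add_mod_right, Nat.mod_eq_of_lt (by omega)]
    omega

lemma fin_sub_val_sum {N : ℕ} (i j : Fin N) (hij : i ≠ j) :
    ((j - i : Fin N) : ℕ) + ((i - j : Fin N) : ℕ) = N := by
  rw [Fin.sub_def, Fin.sub_def]
  exact nat_mod_sum j.isLt i.isLt (fun h => hij (Fin.ext h.symm))

lemma fin_sub_val_pos {N : ℕ} [NeZero N] (i j : Fin N) (hij : i ≠ j) :
    0 < ((j - i : Fin N) : ℕ) := by
  have h : j - i ≠ 0 := sub_ne_zero.mpr (Ne.symm hij)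
  have h2 : ((j - i : Fin N) : ℕ) ≠ 0 := by
    intro h0; exact h (Fin.ext (by simpa using h0))
  omega

include hAdj in
lemma coalDist_eq (hN : 3 ≤ N) (i j : Fin N) (hij : i ≠ j) :
    coalDist Adj i j = min ((j - i : Fin N) : ℕ) ((i - j : Fin N) : ℕ) := by
  haveI : NeZero N := ⟨by omega⟩
  set d1 := ((j - i : Fin N) : ℕ) with hd1
  set d2 := ((i - j : Fin N) : ℕ) with hd2
  have hsum : d1 + d2 = N := fin_sub_val_sum i j hij
  have hp1 : 0 < d1 := fin_sub_val_pos i j hij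
  have hp2 : 0 < d2 := fin_sub_val_pos j i hij.symm
  have hij' : i + (j - i) = j := by ring
  have hji' : j + (i - j) = i := by ring
  have hmem : min d1 d2 ∈ {m | ∃ (mi mj : ℕ) (li lj : ℕ → Fin N), li 0 = i ∧ lj 0 = j ∧
      IsDiPath Adj li mi ∧ IsDiPath Adj lj mj ∧ li mi = lj mj ∧ m = max mi mj} := by
    rcases le_total d1 d2 with h | h
    · refine ⟨d1, 0, fun k => i + (k : Fin N), fun _ => j, by simp, rfl,
        isDiPath_forward hAdj (by omega) i d1, fun k hk => absurd hk (by omega), ?_, ?_⟩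
      · show i + ((d1 : ℕ) : Fin N) = j
        rw [hd1, Fin.cast_val_eq_self, hij']
      · omega
    · refine ⟨0, d2, fun _ => i, fun k => j + (k : Fin N), rfl, by simp,
        fun k hk => absurd hk (by omega), isDiPath_forward hAdj (by omega) j d2, ?_, ?_⟩
      · show i = j + ((d2 : ℕ) : Fin N)
        rw [hd2, Fin.cast_val_eq_self, hji']
      · omega
  refine le_antisymm (Nat.sInf_le hmem) (le_csInf ⟨_, hmem⟩ ?_)
  rintro m ⟨mi, mj, li, lj, h0i, h0j, hpi, hpj, heq, rfl⟩
  have hvi := path_val hAdj (by omega) hpi mi le_rfl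
  have hvj := path_val hAdj (by omega) hpj mj le_rfl
  rw [h0i] at hvi
  rw [h0j] at hvj
  have hj : (j : ℕ) = ((i : ℕ) + d1) % N := by
    rw [← hij', Fin.val_add]
  have hcong : ((i : ℕ) + mi) % N = ((i : ℕ) + (d1 + mj)) % N := by
    have := congrArg Fin.val heq
    rw [hvi, hvj, hj, Nat.mod_add_mod, add_assoc] at this
    exact this
  have hme : mi ≡ d1 + mj [MOD N] := Nat.ModEq.add_left_cancel' _ hcong
  by_contra hlt
  push_neg at hlt
  have hmi1 : mi < d1 := lt_of_le_of_lt (le_max_left _ _) (lt_of_lt_of_le hlt (min_le_left _ _))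
  have hmi2 : mi < d2 := lt_of_le_of_lt (le_max_left _ _) (lt_of_lt_of_le hlt (min_le_right _ _))
  have hmj1 : mj < d1 := lt_of_le_of_lt (le_max_right _ _) (lt_of_lt_of_le hlt (min_le_left _ _))
  have hmj2 : mj < d2 := lt_of_le_of_lt (le_max_right _ _) (lt_of_lt_of_le hlt (min_le_right _ _))
  rcases le_or_gt mj mi with h | h
  · have h2 : (mi - mj) + mj ≡ d1 + mj [MOD N] := by rw [Nat.sub_add_cancel h]; exact hme
    have h3 := Nat.ModEq.add_right_cancel' mj h2
    have h4 : (mi - mj) % N = d1 % N := h3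
    rw [Nat.mod_eq_of_lt (by omega), Nat.mod_eq_of_lt (by omega)] at h4
    omega
  · have e : d1 + mj = (d1 + (mj - mi)) + mi := by omega
    have h2 : 0 + mi ≡ (d1 + (mj - mi)) + mi [MOD N] := by
      rw [zero_add]; rw [e] at hme; exact hme
    have h3 := Nat.ModEq.add_right_cancel' mi h2
    have h4 : 0 % N = (d1 + (mj - mi)) % N := h3
    rw [Nat.zero_mod, Nat.mod_eq_of_lt (by omega)] at h4
    omega




include hAdj in
lemma coalDiam_eq (hN : 3 ≤ N) : coalDiam Adj = N / 2 := by
  haveI : NeZero N := ⟨by omega⟩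
  have hbound : ∀ m ∈ {m | ∃ i j, i ≠ j ∧ m = coalDist Adj i j}, m ≤ N / 2 := by
    rintro m ⟨i, j, hij, rfl⟩
    rw [coalDist_eq hAdj hN i j hij]
    have hsum := fin_sub_val_sum i j hij
    omega
  have hmem : N / 2 ∈ {m | ∃ i j, i ≠ j ∧ m = coalDist Adj i j} := by
    have hlt : N / 2 < N := by omega
    refine ⟨0, ⟨N / 2, hlt⟩, ?_, ?_⟩
    · intro h
      have := congrArg Fin.val h
      simp at this
      omega
    · have hne : (0 : Fin N) ≠ ⟨N / 2, hlt⟩ := by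
        intro h
        have := congrArg Fin.val h
        simp at this
        omega
      rw [coalDist_eq hAdj hN _ _ hne]
      have h1 : (((⟨N / 2, hlt⟩ : Fin N) - 0 : Fin N) : ℕ) = N / 2 := by
        rw [sub_zero]
      have hsum := fin_sub_val_sum (0 : Fin N) ⟨N / 2, hlt⟩ hne
      omega
  exact le_antisymm (csSup_le ⟨_, hmem⟩ hbound) (le_csSup ⟨N / 2, hbound⟩ hmem)


lemma fin_one_le_val {N : ℕ} [NeZero N] (x : Fin N) (hx : x ≠ 0) : 1 ≤ x.val :=
  Nat.pos_of_ne_zero (fun h => hx (Fin.ext (by rw [h, Fin.val_zero])))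

lemma fin_val_sub_one {N : ℕ} [NeZero N] (hN : 3 ≤ N) (i : Fin N) (hi : i ≠ 0) :
    ((i - 1 : Fin N) : ℕ) = i.val - 1 := by
  have h1 : 1 ≤ i.val := fin_one_le_val i hi
  rw [Fin.sub_def]
  show (N - ((1 : Fin N) : ℕ) + i.val) % N = i.val - 1
  rw [Fin.val_one', Nat.mod_eq_of_lt (show 1 < N by omega)]
  have e : N - 1 + i.val = (i.val - 1) + N := by omega
  rw [e, Nat.add_mod_right, Nat.mod_eq_of_lt (by omega)]

include hAdj in
lemma arbo_depth (hN : 3 ≤ N) {p : Fin N → Fin N} {r : Fin N}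
    (hp : IsTransposeArborescence Adj p r) (i : Fin N) :
    arboDepth p r i = ((i - r : Fin N) : ℕ) := by
  haveI : NeZero N := ⟨by omega⟩
  obtain ⟨hpr, hadjp, hreach⟩ := hp
  have hparent : ∀ x : Fin N, x ≠ r → p x = x - 1 := by
    intro x hx
    have h := (hAdj _ _).mp (hadjp x hx)
    have h2 : (x : ℕ) = ((p x + 1 : Fin N) : ℕ) := by
      rw [fin_val_add_one (show (1:ℕ) < N by omega)]; exact h
    have h3 : x = p x + 1 := Fin.ext h2
    rw [eq_sub_iff_add_eq]
    exact h3.symm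
  have hiter : ∀ k ≤ ((i - r : Fin N) : ℕ), p^[k] i = i - (k : Fin N) := by
    intro k hk
    induction k with
    | zero => simp
    | succ k ih =>
      have hne : i - (k : Fin N) ≠ r := by
        intro h
        have hk2 : ((k : ℕ) : Fin N) = i - r := by rw [← h]; ring
        have hv := congrArg Fin.val hk2
        rw [Fin.val_natCast] at hv
        have hmod : k % N = k := Nat.mod_eq_of_lt (by have := (i - r).isLt; omega)
        omega
      rw [Function.iterate_succ_apply', ih (by omega), hparent _ hne]
      have hc : ((k + 1 : ℕ) : Fin N) = (k : Fin N) + 1 := by push_cast; ring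
      rw [hc]; ring
  have hmem : p^[((i - r : Fin N) : ℕ)] i = r := by
    rw [hiter _ le_rfl, Fin.cast_val_eq_self]; ring
  refine le_antisymm (Nat.sInf_le hmem) (le_csInf ⟨_, hmem⟩ ?_)
  intro b hb
  by_contra hlt
  push_neg at hlt
  have hbiter := hiter b (by omega)
  have hb' : p^[b] i = r := hb
  rw [hbiter] at hb'
  have hk2 : ((b : ℕ) : Fin N) = i - r := by rw [← hb']; ring
  have hv := congrArg Fin.val hk2
  rw [Fin.val_natCast, Nat.mod_eq_of_lt (by have := (i - r).isLt; omega)] at hv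
  omega

include hAdj in
lemma arbo_sup (hN : 3 ≤ N) {p : Fin N → Fin N} {r : Fin N}
    (hp : IsTransposeArborescence Adj p r) :
    (⨆ i : Fin N, arboDepth p r i) = N - 1 := by
  haveI : NeZero N := ⟨by omega⟩
  have hd : ∀ i, arboDepth p r i = ((i - r : Fin N) : ℕ) := fun i => arbo_depth hAdj hN hp i
  apply le_antisymm
  · apply ciSup_le
    intro i
    rw [hd]
    have := (i - r).isLt
    omega
  · have hb : BddAbove (Set.range fun i => arboDepth p r i) := (Set.finite_range _).bddAbove
    have hle : arboDepth p r (r - 1) ≤ ⨆ i : Fin N, arboDepth p r i := le_ciSup hb (r - 1)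
    rw [hd (r - 1)] at hle
    have h01 : (1 : Fin N) ≠ (0 : Fin N) := by
      intro h
      have := congrArg Fin.val h
      rw [Fin.val_one', Nat.mod_eq_of_lt (show 1 < N by omega), Fin.val_zero] at this
      omega
    have hsum := fin_sub_val_sum (1 : Fin N) (0 : Fin N) h01
    have hone : ((1 - 0 : Fin N) : ℕ) = 1 := by
      rw [sub_zero, Fin.val_one', Nat.mod_eq_of_lt (by omega)]
    have h1 : (r - 1 - r : Fin N) = 0 - 1 := by ring
    rw [h1] at hle
    have hval : (((0 : Fin N) - 1 : Fin N) : ℕ) = N - 1 := by omega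
    rw [hval] at hle
    exact hle

include hAdj in
lemma arbo_exists (hN : 3 ≤ N) : ∃ p r, IsTransposeArborescence Adj p r := by
  haveI : NeZero N := ⟨by omega⟩
  refine ⟨fun i => if i = 0 then 0 else i - 1, 0, ?_, ?_, ?_⟩
  · simp
  · intro i hi
    rw [hAdj]
    show (i : ℕ) = (((if i = 0 then (0 : Fin N) else i - 1) : Fin N).val + 1) % N
    rw [if_neg hi, fin_val_sub_one hN i hi]
    have h1 : 1 ≤ i.val := fin_one_le_val i hi
    have e : i.val - 1 + 1 = i.val := by omega
    rw [e, Nat.mod_eq_of_lt i.isLt]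
  · intro i
    have key : ∀ n (x : Fin N), x.val ≤ n →
        ∃ k, (fun i => if i = 0 then 0 else i - 1)^[k] x = 0 := by
      intro n
      induction n with
      | zero =>
        intro x hx
        have hx0 : x = 0 := Fin.ext (by rw [Fin.val_zero]; omega)
        exact ⟨0, by simp [hx0]⟩
      | succ n ih =>
        intro x hx
        by_cases h : x = 0
        · exact ⟨0, by simp [h]⟩
        · have h1 : 1 ≤ x.val := fin_one_le_val x h
          obtain ⟨k, hk⟩ := ih (x - 1) (by rw [fin_val_sub_one hN x h]; omega)
          refine ⟨k + 1, ?_⟩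
          rw [Function.iterate_succ_apply]
          show (fun i => if i = 0 then 0 else i - 1)^[k] (if x = 0 then 0 else x - 1) = 0
          rw [if_neg h]
          exact hk
    exact key N i (by omega)

end AuxStmt17

/-- For the directed cycle on `N ≥ 3` vertices (edge `i → i+1 mod N`), every spanning
arborescence of the transpose graph has height exactly `N − 1` (so the minimal
spanning-tree height is `h̄ = N − 1`), while the coalescence diameter is `D = ⌊N/2⌋`,
and `D ≤ h̄`. -/
theorem stmt_17 (N : ℕ) (hN : 3 ≤ N) :
    let Adj : Fin N → Fin N → Prop := fun i j =>
      (j : ℕ) = ((i : ℕ) + 1) % N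
    (∀ (p : Fin N → Fin N) (r : Fin N), IsTransposeArborescence Adj p r →
        (⨆ i : Fin N, arboDepth p r i) = N - 1) ∧
    (∃ (p : Fin N → Fin N) (r : Fin N), IsTransposeArborescence Adj p r ∧
        (⨆ i : Fin N, arboDepth p r i) = N - 1) ∧
    coalDiam Adj = N / 2 ∧ N / 2 ≤ N - 1 := by
  intro Adj
  have hAdj : ∀ i j, Adj i j ↔ (j : ℕ) = ((i : ℕ) + 1) % N := fun i j => Iff.rfl
  obtain ⟨p, r, hp⟩ := arbo_exists hAdj hN
  exact ⟨fun p' r' hp' => arbo_sup hAdj hN hp', ⟨p, r, hp, arbo_sup hAdj hN hp⟩,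
    coalDiam_eq hAdj hN, by omega⟩
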